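/- Let e be a nonzero proper subdimension vector of d. Then the wall W_e equals Cone(e) ∩ Cone(d − e), where Cone(f) denotes the set of stability parameters θ in the orthogonal complement of d for which a θ-semistable representation of dimension vector f exists, and W_e is the set of θ with θ(e) = 0 such that some θ-semistable representation of dimension vector d has a subrepresentation of dimension vector e. -/

import Mathlib

open scoped BigOperators

/-- A representation of a quiver with vertex set `Q0` and arrow set `Q1`
(with source and target maps `s t : Q1 → Q0`) over a field `k`:
a finite-dimensional `k`-vector space at each vertex and a linear map for each arrow. -/
structure QRep (k : Type) [Field k] {Q0 Q1 : Type} (s t : Q1 → Q0) where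
  V : Q0 → Type
  [addgrp : ∀ i, AddCommGroup (V i)]
  [mod : ∀ i, Module k (V i)]
  [fd : ∀ i, FiniteDimensional k (V i)]
  hom : ∀ a : Q1, V (s a) →ₗ[k] V (t a)

attribute [instance] QRep.addgrp QRep.mod QRep.fd

namespace QRep

variable {k : Type} [Field k] {Q0 Q1 : Type} {s t : Q1 → Q0}

/-- The dimension vector of a representation. -/
noncomputable def dimVec (M : QRep k s t) : Q0 → ℕ := fun i => Module.finrank k (M.V i)

/-- A family of subspaces is a subrepresentation if it is invariant under all arrow maps. -/
def IsSubrep (M : QRep k s t) (U : ∀ i, Submodule k (M.V i)) : Prop :=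
  ∀ a : Q1, ∀ x ∈ U (s a), M.hom a x ∈ U (t a)

/-- The dimension vector of a family of subspaces. -/
noncomputable def subDim (M : QRep k s t) (U : ∀ i, Submodule k (M.V i)) : Q0 → ℕ :=
  fun i => Module.finrank k (U i)

/-- The subrepresentation determined by an invariant family of subspaces. -/
def subRep (M : QRep k s t) (U : ∀ i, Submodule k (M.V i)) (h : M.IsSubrep U) :
    QRep k s t where
  V := fun i => U i
  hom := fun a => (M.hom a).restrict (fun x hx => h a x hx)

/-- The quotient representation by an invariant family of subspaces. -/
def quotRep (M : QRep k s t) (U : ∀ i, Submodule k (M.V i)) (h : M.IsSubrep U) :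
    QRep k s t where
  V := fun i => M.V i ⧸ U i
  hom := fun a => (U (s a)).mapQ (U (t a)) (M.hom a) (fun x hx => h a x hx)

/-- Direct sum of two representations. -/
def dsum (M N : QRep k s t) : QRep k s t where
  V := fun i => M.V i × N.V i
  hom := fun a => (M.hom a).prodMap (N.hom a)

variable [Fintype Q0]

/-- The pairing `θ(d) = θ · d` of a stability parameter with a dimension vector. -/
def pair (θ : Q0 → ℝ) (d : Q0 → ℕ) : ℝ := ∑ i, θ i * (d i : ℝ)

/-- `θ`-semistability: `θ(M) = 0` and `θ(M') ≤ 0` for all subrepresentations. -/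
def Semistable (θ : Q0 → ℝ) (M : QRep k s t) : Prop :=
  pair θ M.dimVec = 0 ∧
    ∀ U : ∀ i, Submodule k (M.V i), M.IsSubrep U → pair θ (M.subDim U) ≤ 0

/-- `θ`-stability: `θ(M) = 0` and `θ(M') < 0` for all proper nonzero subrepresentations. -/
def Stable (θ : Q0 → ℝ) (M : QRep k s t) : Prop :=
  pair θ M.dimVec = 0 ∧
    ∀ U : ∀ i, Submodule k (M.V i), M.IsSubrep U →
      U ≠ (fun _ => ⊥) → U ≠ (fun _ => ⊤) → pair θ (M.subDim U) < 0

end QRep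

section Defs

variable (k : Type) [Field k] {Q0 Q1 : Type} (s t : Q1 → Q0)

/-- `e` is a generic subdimension vector of `d` (Schofield's characterization as definition):
every representation of dimension vector `d` admits a subrepresentation of dimension vector `e`. -/
def GenericSub (e d : Q0 → ℕ) : Prop :=
  e ≤ d ∧ ∀ M : QRep k s t, M.dimVec = d →
    ∃ U : ∀ i, Submodule k (M.V i), M.IsSubrep U ∧ M.subDim U = e

variable [Fintype Q0]

/-- The semistable cone of `d`: stability parameters orthogonal to `d` admitting a
semistable representation of dimension vector `d`. -/
def SstCone (d : Q0 → ℕ) : Set (Q0 → ℝ) :=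
  {θ | QRep.pair θ d = 0 ∧ ∃ M : QRep k s t, M.dimVec = d ∧ QRep.Semistable θ M}

/-- The wall `W_e`: parameters `θ` orthogonal to `d` and `e` such that some `θ`-semistable
representation of dimension vector `d` has a subrepresentation of dimension vector `e`. -/
def Wall (d e : Q0 → ℕ) : Set (Q0 → ℝ) :=
  {θ | QRep.pair θ d = 0 ∧ QRep.pair θ e = 0 ∧
    ∃ (M : QRep k s t) (U : ∀ i, Submodule k (M.V i)),
      M.dimVec = d ∧ M.IsSubrep U ∧ M.subDim U = e ∧ QRep.Semistable θ M}

/-- GIT equivalence of stability parameters: equal semistable loci. -/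
def GITEquiv (d : Q0 → ℕ) (θ η : Q0 → ℝ) : Prop :=
  ∀ M : QRep k s t, M.dimVec = d → (QRep.Semistable θ M ↔ QRep.Semistable η M)

end Defs

/-- The hyperplane `H_e` inside the stability space of `d`. -/
def Hset {Q0 : Type} [Fintype Q0] (d e : Q0 → ℕ) : Set (Q0 → ℝ) :=
  {θ | QRep.pair θ d = 0 ∧ QRep.pair θ e = 0}

section Euler

variable {Q0 Q1 : Type} [Fintype Q0] [Fintype Q1]

/-- The Euler form of the quiver. -/
def euler (s t : Q1 → Q0) (x y : Q0 → ℤ) : ℤ :=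
  (∑ i, x i * y i) - ∑ a, x (s a) * y (t a)

/-- `ext(d, e)`: the maximum of `−⟨d', e⟩` over generic subdimension vectors `d' ↪ d`. -/
noncomputable def extGen (k : Type) [Field k] (s t : Q1 → Q0) (d e : Q0 → ℕ) : ℤ :=
  sSup {z : ℤ | ∃ d' : Q0 → ℕ, GenericSub k s t d' d ∧
    z = -(euler s t (fun i => (d' i : ℤ)) (fun i => (e i : ℤ)))}

end Euler

section Schur

variable {Q0 Q1 : Type} (s t : Q1 → Q0)

/-- Coordinates on the representation space `Rep(Q, d)`. -/
def RepCoords (d : Q0 → ℕ) : Type := Σ a : Q1, Fin (d (t a)) × Fin (d (s a))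

/-- The representation associated to a point of the representation space. -/
def matToRep (k : Type) [Field k] (d : Q0 → ℕ)
    (m : ∀ a : Q1, Matrix (Fin (d (t a))) (Fin (d (s a))) k) : QRep k s t where
  V := fun i => Fin (d i) → k
  hom := fun a => Matrix.mulVecLin (m a)

/-- A nonzero representation is indecomposable if it is not a direct sum of two nonzero
subrepresentations. -/
def Indecomposable (k : Type) [Field k] (M : QRep k s t) : Prop :=
  (∃ i, Module.finrank k (M.V i) ≠ 0) ∧
    ¬ ∃ U W : ∀ i, Submodule k (M.V i), M.IsSubrep U ∧ M.IsSubrep W ∧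
        U ≠ (fun _ => ⊥) ∧ W ≠ (fun _ => ⊥) ∧ ∀ i, IsCompl (U i) (W i)

/-- `d` is a Schur root: a general representation of dimension vector `d` is indecomposable,
i.e. all representations outside the vanishing locus of some nonzero polynomial on the
representation space are indecomposable. -/
def IsSchurRoot (k : Type) [Field k] (d : Q0 → ℕ) : Prop :=
  ∃ p : MvPolynomial (RepCoords s t d) k, p ≠ 0 ∧
    ∀ m : ∀ a : Q1, Matrix (Fin (d (t a))) (Fin (d (s a))) k,
      MvPolynomial.eval (fun x => m x.1 x.2.1 x.2.2) p ≠ 0 →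
        Indecomposable s t k (matToRep s t k d m)

end Schur

section ProofAux

open QRep

variable {k : Type} [Field k] {Q0 Q1 : Type} {s t : Q1 → Q0} [Fintype Q0]

lemma pair_add' (θ : Q0 → ℝ) (x y : Q0 → ℕ) :
    pair θ (fun i => x i + y i) = pair θ x + pair θ y := by
  unfold QRep.pair
  rw [← Finset.sum_add_distrib]
  exact Finset.sum_congr rfl fun i _ => by push_cast; ring

lemma pair_sub' (θ : Q0 → ℝ) (x y : Q0 → ℕ) (h : y ≤ x) :
    pair θ (fun i => x i - y i) = pair θ x - pair θ y := by
  unfold QRep.pair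
  rw [← Finset.sum_sub_distrib]
  exact Finset.sum_congr rfl fun i _ => by rw [Nat.cast_sub (h i)]; ring

lemma pair_congr (θ : Q0 → ℝ) {x y : Q0 → ℕ} (h : ∀ i, x i = y i) :
    pair θ x = pair θ y := by
  have : x = y := funext h
  rw [this]

lemma finrank_comap_subtype {V : Type} [AddCommGroup V] [Module k V]
    (X Y : Submodule k V) :
    Module.finrank k (Y.comap X.subtype) = Module.finrank k ↥(Y ⊓ X) := by
  have h1 : Y.comap X.subtype = (Y ⊓ X).comap X.subtype := by
    ext x
    simp only [Submodule.mem_comap, Submodule.mem_inf, Submodule.coe_subtype]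
    exact ⟨fun h => ⟨h, x.2⟩, fun h => h.1⟩
  rw [h1]
  exact (Submodule.comapSubtypeEquivOfLe inf_le_right).finrank_eq

lemma finrank_eq_range_add_ker {V W : Type} [AddCommGroup V] [Module k V]
    [AddCommGroup W] [Module k W] [FiniteDimensional k V]
    (X : Submodule k V) (f : V →ₗ[k] W) :
    Module.finrank k X
      = Module.finrank k (X.map f) + Module.finrank k ↥(LinearMap.ker f ⊓ X) := by
  have h := LinearMap.finrank_range_add_finrank_ker (f.comp X.subtype)
  rw [LinearMap.range_comp, Submodule.range_subtype] at h
  have hker : LinearMap.ker (f.comp X.subtype) = (LinearMap.ker f).comap X.subtype := by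
    ext x; simp [LinearMap.mem_ker]
  rw [hker, finrank_comap_subtype] at h
  exact h.symm

lemma finrank_comap_mkQ {V : Type} [AddCommGroup V] [Module k V] [FiniteDimensional k V]
    (U : Submodule k V) (W : Submodule k (V ⧸ U)) :
    Module.finrank k (W.comap U.mkQ) = Module.finrank k U + Module.finrank k W := by
  have h := finrank_eq_range_add_ker (k := k) (W.comap U.mkQ) U.mkQ
  have h1 : (W.comap U.mkQ).map U.mkQ = W := by
    rw [Submodule.map_comap_eq, Submodule.range_mkQ, top_inf_eq]
  have h2 : LinearMap.ker U.mkQ ⊓ W.comap U.mkQ = U := by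
    rw [Submodule.ker_mkQ]
    refine inf_eq_left.mpr fun x hx => ?_
    simp only [Submodule.mem_comap, Submodule.mkQ_apply]
    rw [Submodule.Quotient.mk_eq_zero U |>.mpr hx]
    exact W.zero_mem
  rw [h1, h2] at h
  omega

lemma sub_semistable {θ : Q0 → ℝ} {M : QRep k s t} (hM : Semistable θ M)
    (U : ∀ i, Submodule k (M.V i)) (hU : M.IsSubrep U)
    (h0 : pair θ (M.subDim U) = 0) :
    Semistable θ (M.subRep U hU) := by
  constructor
  · exact h0
  · intro W hW
    have hW' : M.IsSubrep (fun i => (W i).map (U i).subtype) := by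
      intro a x hx
      refine Submodule.mem_map.mpr ?_; have hx := Submodule.mem_map.mp hx
      obtain ⟨u, hu, rfl⟩ := hx
      exact ⟨(M.subRep U hU).hom a u, hW a u hu, rfl⟩
    have hdim : (M.subRep U hU).subDim W = M.subDim (fun i => (W i).map (U i).subtype) := by
      funext i
      exact (Submodule.finrank_map_subtype_eq (U i) (W i)).symm
    rw [hdim]
    exact hM.2 _ hW'

lemma quot_semistable {θ : Q0 → ℝ} {M : QRep k s t} (hM : Semistable θ M)
    (U : ∀ i, Submodule k (M.V i)) (hU : M.IsSubrep U)
    (h0 : pair θ (M.subDim U) = 0) :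
    Semistable θ (M.quotRep U hU) := by
  have hdsum : pair θ (M.quotRep U hU).dimVec + pair θ (M.subDim U) = pair θ M.dimVec := by
    rw [← pair_add']
    exact pair_congr θ fun i => Submodule.finrank_quotient_add_finrank (U i)
  constructor
  · have := hM.1
    linarith
  · intro W hW
    have hW' : M.IsSubrep (fun i => (W i).comap (U i).mkQ) := by
      intro a x hx
      refine Submodule.mem_comap.mpr ?_; have hx := Submodule.mem_comap.mp hx
      have h2 : (M.quotRep U hU).hom a ((U (s a)).mkQ x) ∈ W (t a) := hW a _ hx
      have h3 : (M.quotRep U hU).hom a ((U (s a)).mkQ x) = (U (t a)).mkQ (M.hom a x) := by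
        exact rfl
      rwa [h3] at h2
    have heq : pair θ (M.subDim (fun i => (W i).comap (U i).mkQ))
        = pair θ (M.subDim U) + pair θ ((M.quotRep U hU).subDim W) := by
      rw [← pair_add']
      exact pair_congr θ fun i => finrank_comap_mkQ (U i) (W i)
    have := hM.2 _ hW'
    linarith

lemma dsum_semistable {θ : Q0 → ℝ} {A B : QRep k s t}
    (hA : Semistable θ A) (hB : Semistable θ B) :
    Semistable θ (A.dsum B) := by
  constructor
  · have h : pair θ (A.dsum B).dimVec = pair θ A.dimVec + pair θ B.dimVec := by
      rw [← pair_add']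
      exact pair_congr θ fun i => Module.finrank_prod
    rw [h, hA.1, hB.1, add_zero]
  · intro X hX
    set W1 : ∀ i, Submodule k (A.V i) :=
      fun i => (X i).map (LinearMap.fst k (A.V i) (B.V i)) with hW1def
    set W2 : ∀ i, Submodule k (B.V i) :=
      fun i => (X i).comap (LinearMap.inr k (A.V i) (B.V i)) with hW2def
    have hW1 : A.IsSubrep W1 := by
      intro a x hx
      rw [hW1def] at hx ⊢
      refine Submodule.mem_map.mpr ?_; have hx := Submodule.mem_map.mp hx
      obtain ⟨u, hu, rfl⟩ := hx
      exact ⟨(A.dsum B).hom a u, hX a u hu, rfl⟩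
    have hW2 : B.IsSubrep W2 := by
      intro a x hx
      rw [hW2def] at hx ⊢
      refine Submodule.mem_comap.mpr ?_; have hx := Submodule.mem_comap.mp hx
      have h2 : (A.dsum B).hom a ((0 : A.V (s a)), x) ∈ X (t a) := hX a _ hx
      have h3 : (A.dsum B).hom a ((0 : A.V (s a)), x)
          = (LinearMap.inr k (A.V (t a)) (B.V (t a))) (B.hom a x) := by
        exact Prod.ext (map_zero (A.hom a)) rfl
      rwa [h3] at h2
    have hmap : ∀ i, (W2 i).map (LinearMap.inr k (A.V i) (B.V i))
        = LinearMap.ker (LinearMap.fst k (A.V i) (B.V i)) ⊓ X i := by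
      intro i
      ext x
      obtain ⟨xa, xb⟩ := x
      simp only [Submodule.mem_map, Submodule.mem_inf, LinearMap.mem_ker,
        LinearMap.fst_apply, Submodule.mem_comap, LinearMap.inr_apply, hW2def,
        Prod.mk.injEq]
      constructor
      · rintro ⟨y, hy, ha, hb⟩
        subst hb
        exact ⟨ha.symm, by rwa [← ha]⟩
      · rintro ⟨ha, hx⟩
        subst ha
        exact ⟨xb, hx, rfl, rfl⟩
    have hdim : ∀ i, Module.finrank k (X i)
        = Module.finrank k (W1 i) + Module.finrank k (W2 i) := by
      intro i
      show Module.finrank k (X i)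
        = Module.finrank k ↥(Submodule.map (LinearMap.fst k (A.V i) (B.V i)) (X i))
          + Module.finrank k ↥((X i).comap (LinearMap.inr k (A.V i) (B.V i)))
      rw [finrank_eq_range_add_ker (k := k) (X i) (LinearMap.fst k (A.V i) (B.V i))]
      congr 1
      have e2 : Submodule.map (LinearMap.inr k (A.V i) (B.V i))
          ((X i).comap (LinearMap.inr k (A.V i) (B.V i)))
          = LinearMap.ker (LinearMap.fst k (A.V i) (B.V i)) ⊓ X i := by
        simpa only [hW2def] using hmap i
      have e1 := Submodule.equivMapOfInjective (LinearMap.inr k (A.V i) (B.V i))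
        LinearMap.inr_injective ((X i).comap (LinearMap.inr k (A.V i) (B.V i)))
      exact (e1.trans (LinearEquiv.ofEq _ _ e2)).finrank_eq.symm
    have heq : pair θ ((A.dsum B).subDim X)
        = pair θ (A.subDim W1) + pair θ (B.subDim W2) := by
      rw [← pair_add']
      exact pair_congr θ fun i => hdim i
    rw [heq]
    have h1 := hA.2 W1 hW1
    have h2 := hB.2 W2 hW2
    linarith

end ProofAux

/-- for a nonzero proper subdimension vector `e` of `d`,
`W_e = Cone(e) ∩ Cone(d − e)`. -/
theorem stmt2 (k : Type) [Field k] {Q0 Q1 : Type} [Fintype Q0] (s t : Q1 → Q0)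
    (d e : Q0 → ℕ) (hle : e ≤ d) (hne : e ≠ 0) (hprop : e ≠ d) :
    Wall k s t d e = SstCone k s t e ∩ SstCone k s t (fun i => d i - e i) := by
  ext θ
  constructor
  · rintro ⟨hθd, hθe, M, U, hMd, hU, hUe, hss⟩
    have hU0 : QRep.pair θ (M.subDim U) = 0 := by rw [hUe]; exact hθe
    constructor
    · exact ⟨hθe, M.subRep U hU, hUe, sub_semistable hss U hU hU0⟩
    · have hde : QRep.pair θ (fun i => d i - e i) = 0 := by
        rw [pair_sub' θ d e hle, hθd, hθe, sub_zero]
      refine ⟨hde, M.quotRep U hU, ?_, quot_semistable hss U hU hU0⟩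
      funext i
      have h1 : Module.finrank k ((M.quotRep U hU).V i) + Module.finrank k (U i)
          = Module.finrank k (M.V i) := Submodule.finrank_quotient_add_finrank (U i)
      have h2 : Module.finrank k (M.V i) = d i := congrFun hMd i
      have h3 : Module.finrank k (U i) = e i := congrFun hUe i
      show Module.finrank k ((M.quotRep U hU).V i) = d i - e i
      omega
  · rintro ⟨⟨hθe, A, hAd, hAss⟩, ⟨hθde, B, hBd, hBss⟩⟩
    have hθd : QRep.pair θ d = 0 := by
      have h : QRep.pair θ d
          = QRep.pair θ e + QRep.pair θ (fun i => d i - e i) := by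
        rw [← pair_add']
        exact pair_congr θ fun i => by have h : e i ≤ d i := hle i; omega
      rw [h, hθe, hθde, add_zero]
    refine ⟨hθd, hθe, A.dsum B,
      fun i => LinearMap.range (LinearMap.inl k (A.V i) (B.V i)), ?_, ?_, ?_,
      dsum_semistable hAss hBss⟩
    · funext i
      have h1 : Module.finrank k ((A.dsum B).V i)
          = Module.finrank k (A.V i) + Module.finrank k (B.V i) := Module.finrank_prod
      have h2 : Module.finrank k (A.V i) = e i := congrFun hAd i
      have h3 : Module.finrank k (B.V i) = d i - e i := congrFun hBd i
      show Module.finrank k ((A.dsum B).V i) = d i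
      have h4 : e i ≤ d i := hle i
      omega
    · intro a x hx
      obtain ⟨y, rfl⟩ := hx
      exact ⟨A.hom a y, by exact Prod.ext rfl (map_zero (B.hom a)).symm⟩
    · funext i
      show Module.finrank k
        ↥(LinearMap.range (LinearMap.inl k (A.V i) (B.V i))) = e i
      rw [LinearMap.finrank_range_of_inj LinearMap.inl_injective]
      exact congrFun hAd i
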